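/- Let f, g : {0,1}^n → R be injective functions satisfying f(x) = g(x + a) for all x (addition modulo 2^n), and write a = a_1 ∥ a_2 with a_1 the top t bits and a_2 the bottom n−t bits. For u ∈ {0,1}^{n−t}, define the multiset H(u) = {f(w ∥ u) : w ∈ {0,1}^t} and R(u) = {g(w ∥ u) : w ∈ {0,1}^t}, where w ∥ u denotes the integer w·2^{n−t} + u. Then for all u, v ∈ {0,1}^{n−t}: H(u) = R(v) (as sets) if and only if u + a_2 = v modulo 2^{n−t}. -/

import Mathlib

/-- Distributed decomposition: with `f, g : Z_{2^n} → R` injective and `f(x) = g(x+a)`,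
`a = a₁·2^{n-t} + a₂`, the sets `H(u) = {f(w∥u)}` and `R(v) = {g(w∥v)}` (`w` ranging over
`{0,1}^t`, `w∥u = w·2^{n-t} + u`) satisfy `H(u) = R(v)` iff `u + a₂ = v` in `Z_{2^{n-t}}`. -/
theorem distributed_sets_eq_iff_shift (n t : ℕ) (ht : 1 ≤ t) (htn : t < n) (R : Type*)
    (f g : ZMod (2 ^ n) → R)
    (hf : Function.Injective f) (hg : Function.Injective g)
    (a₁ a₂ : ℕ) (ha₁ : a₁ < 2 ^ t) (ha₂ : a₂ < 2 ^ (n - t))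
    (hfg : ∀ x : ZMod (2 ^ n),
      f x = g (x + ((a₁ * 2 ^ (n - t) + a₂ : ℕ) : ZMod (2 ^ n)))) :
    ∀ u v : ZMod (2 ^ (n - t)),
      {y : R | ∃ w : ZMod (2 ^ t),
          y = f ((w.val * 2 ^ (n - t) + u.val : ℕ) : ZMod (2 ^ n))} =
        {y : R | ∃ w : ZMod (2 ^ t),
          y = g ((w.val * 2 ^ (n - t) + v.val : ℕ) : ZMod (2 ^ n))} ↔
      u + (a₂ : ZMod (2 ^ (n - t))) = v := by
  haveI : NeZero (2 ^ n) := ⟨(pow_pos (by norm_num : (0:ℕ) < 2) n).ne'⟩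
  haveI hPz : NeZero (2 ^ (n - t)) := ⟨(pow_pos (by norm_num : (0:ℕ) < 2) _).ne'⟩
  haveI : NeZero (2 ^ t) := ⟨(pow_pos (by norm_num : (0:ℕ) < 2) t).ne'⟩
  set P := 2 ^ (n - t) with hPdef
  have hPn : 2 ^ t * P = 2 ^ n := by
    rw [hPdef, ← pow_add]; congr 1; omega
  -- key: f(w∥u) = g((w + a₁ + c)∥(u + a₂))
  have key : ∀ (w : ZMod (2 ^ t)) (u : ZMod P),
      f (((w.val * P + u.val : ℕ) : ZMod (2 ^ n))) =
      g ((((w + (a₁ : ZMod (2^t)) + (((u.val + a₂) / P : ℕ) : ZMod (2^t))).val * P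
            + (u + (a₂ : ZMod P)).val : ℕ) : ZMod (2 ^ n))) := by
    intro w u
    rw [hfg]
    congr 1
    set c : ℕ := (u.val + a₂) / P with hc
    set r : ℕ := (u.val + a₂) % P with hr
    set W : ZMod (2^t) := w + (a₁ : ZMod (2^t)) + (c : ZMod (2^t)) with hW
    set q : ℕ := (w.val + a₁ + c) / 2 ^ t with hq
    have hrval : (u + (a₂ : ZMod P)).val = r := by
      rw [ZMod.val_add, ZMod.val_natCast, Nat.mod_eq_of_lt ha₂, hr]
    have hWval : w.val + a₁ + c = q * 2 ^ t + W.val := by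
      have hWc : W = ((w.val + a₁ + c : ℕ) : ZMod (2 ^ t)) := by
        rw [hW]; push_cast [ZMod.natCast_val, ZMod.cast_id]; rfl
      have hv : W.val = (w.val + a₁ + c) % 2 ^ t := by
        rw [hWc, ZMod.val_natCast]
      have hd := Nat.div_add_mod (w.val + a₁ + c) (2 ^ t)
      rw [hv, hq]
      linarith
    have h2 : c * P + r = u.val + a₂ := by
      rw [hc, hr, Nat.div_add_mod']
    have h1 : (w.val + a₁ + c) * P = q * 2 ^ n + W.val * P := by
      rw [hWval, ← hPn]; ring
    have hnat : w.val * P + u.val + (a₁ * P + a₂)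
        = q * 2 ^ n + (W.val * P + r) := by
      have h1' : w.val * P + a₁ * P + c * P = q * 2 ^ n + W.val * P := by
        rw [← h1]; ring
      linarith
    calc ((w.val * P + u.val : ℕ) : ZMod (2^n)) + ((a₁ * P + a₂ : ℕ) : ZMod (2^n))
        = ((w.val * P + u.val + (a₁ * P + a₂) : ℕ) : ZMod (2^n)) := by push_cast; ring
      _ = ((q * 2 ^ n + (W.val * P + r) : ℕ) : ZMod (2^n)) := by rw [hnat]
      _ = ((W.val * P + (u + (a₂ : ZMod P)).val : ℕ) : ZMod (2^n)) := by
            rw [hrval]; push_cast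
            rw [show ((2 : ZMod (2 ^ n)) ^ n = 0) from by
              have h0 := ZMod.natCast_self (2 ^ n); push_cast at h0; exact h0]
            ring
  -- injectivity of v ↦ R(v)
  have inj : ∀ v₁ v₂ : ZMod P,
      {y : R | ∃ w : ZMod (2 ^ t), y = g ((w.val * P + v₁.val : ℕ) : ZMod (2 ^ n))} =
      {y : R | ∃ w : ZMod (2 ^ t), y = g ((w.val * P + v₂.val : ℕ) : ZMod (2 ^ n))} →
      v₁ = v₂ := by
    intro v₁ v₂ hset
    have hmem : g ((((0 : ZMod (2^t)).val * P + v₁.val : ℕ)) : ZMod (2^n)) ∈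
        {y : R | ∃ w : ZMod (2 ^ t), y = g ((w.val * P + v₁.val : ℕ) : ZMod (2 ^ n))} :=
      ⟨0, rfl⟩
    rw [hset] at hmem
    obtain ⟨w, hw⟩ := hmem
    have hcast := hg hw
    have hmod := (ZMod.natCast_eq_natCast_iff _ _ _).mp hcast
    have hb1 : (0 : ZMod (2^t)).val * P + v₁.val < 2 ^ n := by
      have := v₁.val_lt
      have hle : P ≤ 2 ^ n := by rw [hPdef]; exact Nat.pow_le_pow_right (by norm_num) (by omega)
      simp only [ZMod.val_zero, Nat.zero_mul, Nat.zero_add]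
      omega
    have hb2 : w.val * P + v₂.val < 2 ^ n := by
      have h1 : w.val + 1 ≤ 2 ^ t := w.val_lt
      have h2 : v₂.val < P := v₂.val_lt
      calc w.val * P + v₂.val < w.val * P + P := by omega
        _ = (w.val + 1) * P := by ring
        _ ≤ 2 ^ t * P := Nat.mul_le_mul_right _ h1
        _ = 2 ^ n := hPn
    have heq : (0 : ZMod (2^t)).val * P + v₁.val = w.val * P + v₂.val := by
      unfold Nat.ModEq at hmod
      rw [Nat.mod_eq_of_lt hb1, Nat.mod_eq_of_lt hb2] at hmod
      exact hmod
    simp only [ZMod.val_zero, Nat.zero_mul, Nat.zero_add] at heq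
    have hw0 : w.val = 0 := by
      by_contra h
      have : P ≤ w.val * P := Nat.le_mul_of_pos_left P (Nat.pos_of_ne_zero h)
      have := v₁.val_lt
      omega
    rw [hw0] at heq
    simp only [Nat.zero_mul, Nat.zero_add] at heq
    exact ZMod.val_injective _ heq
  -- step A : H(u) = R(u + a₂)
  have stepA : ∀ u : ZMod P,
      {y : R | ∃ w : ZMod (2 ^ t), y = f ((w.val * P + u.val : ℕ) : ZMod (2 ^ n))} =
      {y : R | ∃ w : ZMod (2 ^ t),
          y = g ((w.val * P + (u + (a₂ : ZMod P)).val : ℕ) : ZMod (2 ^ n))} := by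
    intro u
    ext y
    constructor
    · rintro ⟨w, rfl⟩
      exact ⟨w + (a₁ : ZMod (2^t)) + (((u.val + a₂) / P : ℕ) : ZMod (2^t)), key w u⟩
    · rintro ⟨w, rfl⟩
      refine ⟨w - (a₁ : ZMod (2^t)) - (((u.val + a₂) / P : ℕ) : ZMod (2^t)), ?_⟩
      rw [key]
      ring_nf
  intro u v
  constructor
  · intro h
    rw [stepA u] at h
    exact inj _ _ h
  · rintro rfl
    exact stepA u
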